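/- Let θ ≠ 0, k ∈ ℝ, and let (θ̂_n) and (σ̂_n²) be sequences of real-valued random variables satisfying: lim_{n→∞} n·E[(θ̂_n − θ)²] = σ² with σ² > 0; E[θ̂_n − θ] = o(n⁻¹); E[|θ̂_n − θ|^j] = O(n^{−j/2}) for every integer j ≥ 3; E[σ̂_n² − σ²] = o(n⁻¹); E[(σ̂_n² − σ²)^j] = O(n^{−j}) for every integer j ≥ 2; E[(θ̂_n − θ)(σ̂_n² − σ²)] = o(n⁻¹); and |θ̂_n| ≥ ε almost surely for some ε > 0 and all n. Define the adjusted estimator θ̃_n = θ̂_n + k·σ̂_n²/(n·θ̂_n). Then E[(θ̃_n − θ)³] = E[(θ̂_n − θ)³] + 3k·σ⁴/(n²·θ) + o(n⁻²). -/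

import Mathlib

open MeasureTheory Filter Asymptotics Real

private lemma amgm (u a b : ℝ) (hu : 0 < u) : |a| * |b| ≤ (u * a ^ 2 + b ^ 2 / u) / 2 := by
  rw [le_div_iff₀ (by norm_num : (0:ℝ) < 2), ← sub_nonneg]
  have h : (u * a ^ 2 + b ^ 2 / u) - |a| * |b| * 2 = (u * |a| - |b|) ^ 2 / u := by
    field_simp
    linear_combination (-(u^2)) * sq_abs a - sq_abs b
  rw [h]; positivity

private lemma sq_add_bound (s t : ℝ) : (s + t) ^ 2 ≤ 2 * s ^ 2 + 2 * t ^ 2 := by nlinarith [sq_nonneg (s - t)]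

private lemma cube_add_bound (s t : ℝ) (hs : 0 ≤ s) (ht : 0 ≤ t) : (s + t) ^ 3 ≤ 4 * s ^ 3 + 4 * t ^ 3 := by nlinarith [sq_nonneg (s - t), mul_nonneg hs ht, sq_nonneg (s+t)]

private lemma stageA (k θ s ε : ℝ) (hθ : θ ≠ 0) (hε : 0 < ε) (hs : 0 ≤ s)
    (m : ℝ) (hm : 1 ≤ m) (x v : ℝ) (hx : ε ≤ |x|) :
    |(x + k * v / (m * x) - θ) ^ 3 - (x - θ) ^ 3 - 3 * k * s / (m * θ) * (x - θ) ^ 2|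
      ≤ 3 * |k| / (m * ε * |θ|) * (|θ| * (x - θ) ^ 2 * |v - s| + s * |x - θ| ^ 3)
        + 3 * k ^ 2 / (m ^ 2 * ε ^ 2) * (|x - θ| * (s + |v - s|) ^ 2)
        + |k| ^ 3 / (m ^ 3 * ε ^ 3) * (s + |v - s|) ^ 3 := by
  have hm0 : (0:ℝ) < m := lt_of_lt_of_le one_pos hm
  have hx0 : x ≠ 0 := by
    intro h; rw [h, abs_zero] at hx; linarith
  have hxε : ε ≤ |x| := hx
  have habsx : 0 < |x| := lt_of_lt_of_le hε hx
  have hvbound : |v| ≤ s + |v - s| := by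
    calc |v| = |s + (v - s)| := by ring_nf
    _ ≤ |s| + |v - s| := abs_add_le _ _
    _ = s + |v - s| := by rw [abs_of_nonneg hs]
  have key : (x + k * v / (m * x) - θ) ^ 3 - (x - θ) ^ 3 - 3 * k * s / (m * θ) * (x - θ) ^ 2
      = 3 * k * (x - θ) ^ 2 * (θ * (v - s) - s * (x - θ)) / (m * x * θ)
        + 3 * (x - θ) * (k * v / (m * x)) ^ 2 + (k * v / (m * x)) ^ 3 := by
    field_simp
    ring
  rw [key]
  have habs1 : |3 * k * (x - θ) ^ 2 * (θ * (v - s) - s * (x - θ)) / (m * x * θ)|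
      ≤ 3 * |k| / (m * ε * |θ|) * (|θ| * (x - θ) ^ 2 * |v - s| + s * |x - θ| ^ 3) := by
    rw [abs_div]
    have hnum : |3 * k * (x - θ) ^ 2 * (θ * (v - s) - s * (x - θ))|
        ≤ 3 * |k| * (|θ| * (x - θ) ^ 2 * |v - s| + s * |x - θ| ^ 3) := by
      rw [abs_mul, abs_mul, abs_mul]
      have h1 : |θ * (v - s) - s * (x - θ)| ≤ |θ| * |v - s| + s * |x - θ| := by
        calc |θ * (v - s) - s * (x - θ)| ≤ |θ * (v - s)| + |s * (x - θ)| := abs_sub _ _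
        _ = |θ| * |v - s| + s * |x - θ| := by rw [abs_mul, abs_mul, abs_of_nonneg hs]
      calc |3| * |k| * |(x - θ) ^ 2| * |θ * (v - s) - s * (x - θ)|
          ≤ |3| * |k| * |(x - θ) ^ 2| * (|θ| * |v - s| + s * |x - θ|) := by
            apply mul_le_mul_of_nonneg_left h1; positivity
        _ = 3 * |k| * (|θ| * (x - θ) ^ 2 * |v - s| + s * |x - θ| ^ 3) := by
            have e3 : |x - θ| ^ 3 = |x - θ| * (x - θ) ^ 2 := by rw [← sq_abs]; ring
            rw [abs_of_nonneg (by norm_num : (0:ℝ) ≤ 3), abs_pow, sq_abs, e3]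
            ring
    have hden : m * ε * |θ| ≤ |m * x * θ| := by
      rw [abs_mul, abs_mul, abs_of_pos hm0]
      have := mul_le_mul_of_nonneg_left hxε (le_of_lt hm0)
      apply mul_le_mul_of_nonneg_right this (abs_nonneg θ)
    calc |3 * k * (x - θ) ^ 2 * (θ * (v - s) - s * (x - θ))| / |m * x * θ|
        ≤ (3 * |k| * (|θ| * (x - θ) ^ 2 * |v - s| + s * |x - θ| ^ 3)) / (m * ε * |θ|) := by
          apply div_le_div₀ (by positivity) hnum (by positivity) hden
      _ = 3 * |k| / (m * ε * |θ|) * (|θ| * (x - θ) ^ 2 * |v - s| + s * |x - θ| ^ 3) := by ring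
  have hy : |k * v / (m * x)| ≤ |k| * (s + |v - s|) / (m * ε) := by
    rw [abs_div, abs_mul]
    apply div_le_div₀ (by positivity) (by
      apply mul_le_mul_of_nonneg_left hvbound (abs_nonneg k)) (by positivity)
    rw [abs_mul, abs_of_pos hm0]
    exact mul_le_mul_of_nonneg_left hxε (le_of_lt hm0)
  have habs2 : |3 * (x - θ) * (k * v / (m * x)) ^ 2|
      ≤ 3 * k ^ 2 / (m ^ 2 * ε ^ 2) * (|x - θ| * (s + |v - s|) ^ 2) := by
    rw [abs_mul, abs_mul, abs_pow]
    have h2 : |k * v / (m * x)| ^ 2 ≤ (|k| * (s + |v - s|) / (m * ε)) ^ 2 :=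
      pow_le_pow_left₀ (abs_nonneg _) hy 2
    calc |3| * |x - θ| * |k * v / (m * x)| ^ 2
        ≤ |3| * |x - θ| * (|k| * (s + |v - s|) / (m * ε)) ^ 2 := by
          apply mul_le_mul_of_nonneg_left h2; positivity
      _ = 3 * k ^ 2 / (m ^ 2 * ε ^ 2) * (|x - θ| * (s + |v - s|) ^ 2) := by
          rw [abs_of_nonneg (by norm_num : (0:ℝ) ≤ 3)]
          rw [div_pow, mul_pow, sq_abs]
          ring
  have habs3 : |(k * v / (m * x)) ^ 3| ≤ |k| ^ 3 / (m ^ 3 * ε ^ 3) * (s + |v - s|) ^ 3 := by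
    rw [abs_pow]
    calc |k * v / (m * x)| ^ 3 ≤ (|k| * (s + |v - s|) / (m * ε)) ^ 3 :=
        pow_le_pow_left₀ (abs_nonneg _) hy 3
      _ = |k| ^ 3 / (m ^ 3 * ε ^ 3) * (s + |v - s|) ^ 3 := by
        rw [div_pow, mul_pow, mul_pow]
        ring
  calc |3 * k * (x - θ) ^ 2 * (θ * (v - s) - s * (x - θ)) / (m * x * θ)
        + 3 * (x - θ) * (k * v / (m * x)) ^ 2 + (k * v / (m * x)) ^ 3|
      ≤ |3 * k * (x - θ) ^ 2 * (θ * (v - s) - s * (x - θ)) / (m * x * θ)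
        + 3 * (x - θ) * (k * v / (m * x)) ^ 2| + |(k * v / (m * x)) ^ 3| := abs_add_le _ _
    _ ≤ |3 * k * (x - θ) ^ 2 * (θ * (v - s) - s * (x - θ)) / (m * x * θ)|
        + |3 * (x - θ) * (k * v / (m * x)) ^ 2| + |(k * v / (m * x)) ^ 3| := by
        have := abs_add_le (3 * k * (x - θ) ^ 2 * (θ * (v - s) - s * (x - θ)) / (m * x * θ))
          (3 * (x - θ) * (k * v / (m * x)) ^ 2)
        linarith
    _ ≤ _ := by
        have := habs1; have := habs2; have := habs3; linarith

private lemma stageB (k θ s ε : ℝ) (hθ : θ ≠ 0) (hε : 0 < ε) (hs : 0 ≤ s)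
    (m : ℝ) (hm : 1 ≤ m) (x v : ℝ) :
    3 * |k| / (m * ε * |θ|) * (|θ| * (x - θ) ^ 2 * |v - s| + s * |x - θ| ^ 3)
        + 3 * k ^ 2 / (m ^ 2 * ε ^ 2) * (|x - θ| * (s + |v - s|) ^ 2)
        + |k| ^ 3 / (m ^ 3 * ε ^ 3) * (s + |v - s|) ^ 3
      ≤ 3 * |k| / (2 * ε * m) * ((x - θ) ^ 4 + (v - s) ^ 2)
        + 3 * |k| * s / (ε * |θ| * m) * |x - θ| ^ 3
        + 3 * k ^ 2 / (ε ^ 2 * m ^ 2) *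
            (s ^ 2 * (Real.sqrt m * (x - θ) ^ 2 + (Real.sqrt m)⁻¹)
              + ((Real.sqrt m)⁻¹ * (x - θ) ^ 2 + Real.sqrt m * (v - s) ^ 4))
        + |k| ^ 3 / (ε ^ 3 * m ^ 3) *
            (4 * s ^ 3 + 2 * (m⁻¹ * (v - s) ^ 2 + m * (v - s) ^ 4)) := by
  have hm0 : (0:ℝ) < m := lt_of_lt_of_le one_pos hm
  set u := Real.sqrt m with hudef
  have hu : 0 < u := Real.sqrt_pos.mpr hm0
  have hθ0 : (0:ℝ) < |θ| := abs_pos.mpr hθ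
  -- piece 1
  have key1 : (x - θ) ^ 2 * |v - s| ≤ ((x - θ) ^ 4 + (v - s) ^ 2) / 2 := by
    have h := amgm 1 ((x - θ) ^ 2) (v - s) one_pos
    rw [abs_of_nonneg (sq_nonneg _)] at h
    calc (x - θ) ^ 2 * |v - s| ≤ (1 * ((x - θ) ^ 2) ^ 2 + (v - s) ^ 2 / 1) / 2 := h
      _ = ((x - θ) ^ 4 + (v - s) ^ 2) / 2 := by ring
  have h1 : 3 * |k| / (m * ε * |θ|) * (|θ| * (x - θ) ^ 2 * |v - s| + s * |x - θ| ^ 3)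
      ≤ 3 * |k| / (2 * ε * m) * ((x - θ) ^ 4 + (v - s) ^ 2)
        + 3 * |k| * s / (ε * |θ| * m) * |x - θ| ^ 3 := by
    have e1 : 3 * |k| / (m * ε * |θ|) * (|θ| * (x - θ) ^ 2 * |v - s| + s * |x - θ| ^ 3)
        = 3 * |k| / (m * ε) * ((x - θ) ^ 2 * |v - s|)
          + 3 * |k| * s / (ε * |θ| * m) * |x - θ| ^ 3 := by
      field_simp
    rw [e1]
    have : 3 * |k| / (m * ε) * ((x - θ) ^ 2 * |v - s|)
        ≤ 3 * |k| / (m * ε) * (((x - θ) ^ 4 + (v - s) ^ 2) / 2) :=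
      mul_le_mul_of_nonneg_left key1 (by positivity)
    have e2 : 3 * |k| / (m * ε) * (((x - θ) ^ 4 + (v - s) ^ 2) / 2)
        = 3 * |k| / (2 * ε * m) * ((x - θ) ^ 4 + (v - s) ^ 2) := by ring
    linarith
  -- piece 2
  have key2a : |x - θ| ≤ (u * (x - θ) ^ 2 + u⁻¹) / 2 := by
    have h := amgm u (x - θ) 1 hu
    simpa [one_div] using h
  have key2b : |x - θ| * (v - s) ^ 2 ≤ (u⁻¹ * (x - θ) ^ 2 + u * (v - s) ^ 4) / 2 := by
    have h := amgm u⁻¹ (x - θ) ((v - s) ^ 2) (inv_pos.mpr hu)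
    have ed : ((v - s) ^ 2) ^ 2 / u⁻¹ = u * (v - s) ^ 4 := by
      field_simp [hu.ne']
    rw [abs_of_nonneg (sq_nonneg (v - s)), ed] at h
    calc |x - θ| * (v - s) ^ 2 ≤ (u⁻¹ * (x - θ) ^ 2 + u * (v - s) ^ 4) / 2 := h
      _ = (u⁻¹ * (x - θ) ^ 2 + u * (v - s) ^ 4) / 2 := by ring
  have h2 : 3 * k ^ 2 / (m ^ 2 * ε ^ 2) * (|x - θ| * (s + |v - s|) ^ 2)
      ≤ 3 * k ^ 2 / (ε ^ 2 * m ^ 2) *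
          (s ^ 2 * (u * (x - θ) ^ 2 + u⁻¹) + (u⁻¹ * (x - θ) ^ 2 + u * (v - s) ^ 4)) := by
    have inner : |x - θ| * (s + |v - s|) ^ 2
        ≤ s ^ 2 * (u * (x - θ) ^ 2 + u⁻¹) + (u⁻¹ * (x - θ) ^ 2 + u * (v - s) ^ 4) := by
      have hb : (s + |v - s|) ^ 2 ≤ 2 * s ^ 2 + 2 * (v - s) ^ 2 := by
        have := sq_add_bound s |v - s|
        rw [sq_abs] at this
        exact this
      have step1 : |x - θ| * (s + |v - s|) ^ 2 ≤ |x - θ| * (2 * s ^ 2 + 2 * (v - s) ^ 2) :=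
        mul_le_mul_of_nonneg_left hb (abs_nonneg _)
      have step2 : |x - θ| * (2 * s ^ 2 + 2 * (v - s) ^ 2)
          = 2 * s ^ 2 * |x - θ| + 2 * (|x - θ| * (v - s) ^ 2) := by ring
      have step3 : 2 * s ^ 2 * |x - θ| ≤ s ^ 2 * (u * (x - θ) ^ 2 + u⁻¹) := by
        nlinarith [key2a, sq_nonneg s]
      have step4 : 2 * (|x - θ| * (v - s) ^ 2) ≤ u⁻¹ * (x - θ) ^ 2 + u * (v - s) ^ 4 := by
        linarith [key2b]
      linarith [step1, step3, step4, step2.le, step2.ge]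
    have e : 3 * k ^ 2 / (m ^ 2 * ε ^ 2) = 3 * k ^ 2 / (ε ^ 2 * m ^ 2) := by ring
    rw [e]
    exact mul_le_mul_of_nonneg_left inner (by positivity)
  -- piece 3
  have key3 : |v - s| ^ 3 ≤ (m⁻¹ * (v - s) ^ 2 + m * (v - s) ^ 4) / 2 := by
    have h := amgm m⁻¹ (v - s) ((v - s) ^ 2) (inv_pos.mpr hm0)
    have ed : ((v - s) ^ 2) ^ 2 / m⁻¹ = m * (v - s) ^ 4 := by
      field_simp [hm0.ne']
    rw [abs_of_nonneg (sq_nonneg (v - s)), ed] at h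
    calc |v - s| ^ 3 = |v - s| * (v - s) ^ 2 := by rw [← sq_abs]; ring
      _ ≤ (m⁻¹ * (v - s) ^ 2 + m * (v - s) ^ 4) / 2 := h
      _ = (m⁻¹ * (v - s) ^ 2 + m * (v - s) ^ 4) / 2 := by ring
  have h3 : |k| ^ 3 / (m ^ 3 * ε ^ 3) * (s + |v - s|) ^ 3
      ≤ |k| ^ 3 / (ε ^ 3 * m ^ 3) *
          (4 * s ^ 3 + 2 * (m⁻¹ * (v - s) ^ 2 + m * (v - s) ^ 4)) := by
    have inner : (s + |v - s|) ^ 3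
        ≤ 4 * s ^ 3 + 2 * (m⁻¹ * (v - s) ^ 2 + m * (v - s) ^ 4) := by
      have hc := cube_add_bound s |v - s| hs (abs_nonneg _)
      linarith [key3]
    have e : |k| ^ 3 / (m ^ 3 * ε ^ 3) = |k| ^ 3 / (ε ^ 3 * m ^ 3) := by ring
    rw [e]
    exact mul_le_mul_of_nonneg_left inner (by positivity)
  linarith [h1, h2, h3]


private lemma tendsto_rpow_nat (p : ℝ) (hp : 0 < p) :
    Tendsto (fun n : ℕ => (n : ℝ) ^ (-p)) atTop (nhds 0) :=
  (tendsto_rpow_neg_atTop hp).comp tendsto_natCast_atTop_atTop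

private lemma tendsto_nat_mul (f : ℕ → ℝ) (p : ℝ) (hp : 1 < p)
    (h : f =O[atTop] fun n : ℕ => (n : ℝ) ^ (-p)) :
    Tendsto (fun n : ℕ => (n : ℝ) * f n) atTop (nhds 0) := by
  have h2 : (fun n : ℕ => (n : ℝ) * f n) =O[atTop] fun n : ℕ => (n : ℝ) ^ (-(p - 1)) := by
    refine ((isBigO_refl (fun n : ℕ => (n : ℝ)) atTop).mul h).congr' EventuallyEq.rfl ?_
    filter_upwards [eventually_ge_atTop 1] with n hn
    have hn0 : (0 : ℝ) < n := by exact_mod_cast Nat.lt_of_lt_of_le Nat.zero_lt_one hn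
    rw [show (-(p - 1) : ℝ) = 1 + -p by ring, Real.rpow_add hn0, Real.rpow_one]
  exact h2.trans_tendsto (tendsto_rpow_nat _ (by linarith))

private lemma sqrt_le_self' (x : ℝ) (hx : 1 ≤ x) : Real.sqrt x ≤ x := by
  nlinarith [Real.sq_sqrt (show (0:ℝ) ≤ x by linarith), Real.sqrt_nonneg x,
    sq_nonneg (Real.sqrt x - 1)]

private lemma tendsto_sqrt_mul (f : ℕ → ℝ) (p : ℝ) (hp : 1 < p) (hf : ∀ n, 0 ≤ f n)
    (h : f =O[atTop] fun n : ℕ => (n : ℝ) ^ (-p)) :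
    Tendsto (fun n : ℕ => Real.sqrt (n : ℝ) * f n) atTop (nhds 0) := by
  refine squeeze_zero' (Eventually.of_forall fun n => mul_nonneg (Real.sqrt_nonneg _) (hf n))
    ?_ (tendsto_nat_mul f p hp h)
  filter_upwards [eventually_ge_atTop 1] with n hn
  have hn1 : (1 : ℝ) ≤ (n : ℝ) := by exact_mod_cast hn
  exact mul_le_mul_of_nonneg_right (sqrt_le_self' _ hn1) (hf n)

private lemma tendsto_inv_sqrt :
    Tendsto (fun n : ℕ => (Real.sqrt (n : ℝ))⁻¹) atTop (nhds 0) := by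
  refine (tendsto_rpow_nat (1/2) (by norm_num)).congr' ?_
  filter_upwards [eventually_ge_atTop 1] with n hn
  have hn0 : (0 : ℝ) ≤ (n : ℝ) := by positivity
  rw [Real.rpow_neg hn0, Real.sqrt_eq_rpow]

private lemma ptwise (k θ s ε : ℝ) (hθ : θ ≠ 0) (hε : 0 < ε) (hs : 0 ≤ s)
    (m : ℝ) (hm : 1 ≤ m) (x v : ℝ) (hx : ε ≤ |x|) :
    |(x + k * v / (m * x) - θ) ^ 3 - (x - θ) ^ 3 - 3 * k * s / (m * θ) * (x - θ) ^ 2|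
      ≤ (3 * |k| / (2 * ε * m)) * (x - θ) ^ 4
        + (3 * |k| / (2 * ε * m) + 2 * |k| ^ 3 / (ε ^ 3 * m ^ 4)) * (v - s) ^ 2
        + (3 * |k| * s / (ε * |θ| * m)) * |x - θ| ^ 3
        + (3 * k ^ 2 / (ε ^ 2 * m ^ 2) * (s ^ 2 * Real.sqrt m + (Real.sqrt m)⁻¹)) * (x - θ) ^ 2
        + (3 * k ^ 2 * Real.sqrt m / (ε ^ 2 * m ^ 2) + 2 * |k| ^ 3 / (ε ^ 3 * m ^ 2)) * (v - s) ^ 4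
        + (3 * k ^ 2 * s ^ 2 / (ε ^ 2 * m ^ 2) * (Real.sqrt m)⁻¹ + 4 * |k| ^ 3 * s ^ 3 / (ε ^ 3 * m ^ 3)) := by
  refine (stageA k θ s ε hθ hε hs m hm x v hx).trans
    ((stageB k θ s ε hθ hε hs m hm x v).trans_eq ?_)
  have hm0 : m ≠ 0 := by intro h; rw [h] at hm; linarith
  have hu0 : Real.sqrt m ≠ 0 := Real.sqrt_ne_zero'.mpr (by linarith)
  field_simp
  ring


set_option maxHeartbeats 1000000 in
/-- third moment of the plug-in adjusted estimator
`θ̃_n = θ̂_n + k·σ̂_n²/(n·θ̂_n)`: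
`E[(θ̃_n − θ)³] = E[(θ̂_n − θ)³] + 3kσ⁴/(n²θ) + o(n⁻²)`. -/
theorem stmt_15
    {Ω : Type*} [MeasurableSpace Ω] (μ : Measure Ω) [IsProbabilityMeasure μ]
    (θ : ℝ) (hθ : θ ≠ 0) (k : ℝ)
    (θhat : ℕ → Ω → ℝ) (hmeasθ : ∀ n, Measurable (θhat n))
    (σhat2 : ℕ → Ω → ℝ) (hmeasσ : ∀ n, Measurable (σhat2 n))
    (hmomθ : ∀ (n j : ℕ), Integrable (fun ω => |θhat n ω - θ| ^ j) μ)
    (σ2 : ℝ) (hσ2 : 0 < σ2)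
    (hmomσ : ∀ (n j : ℕ), Integrable (fun ω => (σhat2 n ω - σ2) ^ j) μ)
    (hmomcr : ∀ n : ℕ, Integrable (fun ω => (θhat n ω - θ) * (σhat2 n ω - σ2)) μ)
    (hintadj : ∀ n : ℕ, Integrable
      (fun ω => (θhat n ω + k * σhat2 n ω / ((n : ℝ) * θhat n ω) - θ) ^ 3) μ)
    (hA11 : Tendsto (fun n : ℕ => (n : ℝ) * ∫ ω, (θhat n ω - θ) ^ 2 ∂μ) atTop (nhds σ2))
    (hA12 : (fun n : ℕ => ∫ ω, (θhat n ω - θ) ∂μ) =o[atTop] fun n : ℕ => (n : ℝ)⁻¹)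
    (hA13 : ∀ j : ℕ, 3 ≤ j →
      (fun n : ℕ => ∫ ω, |θhat n ω - θ| ^ j ∂μ) =O[atTop]
        fun n : ℕ => (n : ℝ) ^ (-(j : ℝ) / 2))
    (hA31 : (fun n : ℕ => ∫ ω, (σhat2 n ω - σ2) ∂μ) =o[atTop] fun n : ℕ => (n : ℝ)⁻¹)
    (hA32 : ∀ j : ℕ, 2 ≤ j →
      (fun n : ℕ => ∫ ω, (σhat2 n ω - σ2) ^ j ∂μ) =O[atTop]
        fun n : ℕ => ((n : ℝ) ^ j)⁻¹)
    (hA33 : (fun n : ℕ => ∫ ω, (θhat n ω - θ) * (σhat2 n ω - σ2) ∂μ) =o[atTop]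
      fun n : ℕ => (n : ℝ)⁻¹)
    (ε : ℝ) (hε : 0 < ε) (hA4 : ∀ n, ∀ᵐ ω ∂μ, ε ≤ |θhat n ω|) :
    (fun n : ℕ =>
        (∫ ω, (θhat n ω + k * σhat2 n ω / ((n : ℝ) * θhat n ω) - θ) ^ 3 ∂μ) -
          (∫ ω, (θhat n ω - θ) ^ 3 ∂μ) -
          3 * k * σ2 ^ 2 / ((n : ℝ) ^ 2 * θ))
      =o[atTop] fun n : ℕ => ((n : ℝ) ^ 2)⁻¹ := by
  -- basic integrability
  have measX : ∀ n, Measurable fun ω => θhat n ω - θ := fun n => (hmeasθ n).sub measurable_const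
  have intX2 : ∀ n, Integrable (fun ω => (θhat n ω - θ) ^ 2) μ := fun n =>
    (hmomθ n 2).congr (Eventually.of_forall fun ω => sq_abs _)
  have intX3 : ∀ n, Integrable (fun ω => (θhat n ω - θ) ^ 3) μ := fun n =>
    (hmomθ n 3).mono' ((measX n).pow_const 3).aestronglyMeasurable
      (Eventually.of_forall fun ω => le_of_eq (by rw [Real.norm_eq_abs, abs_pow]))
  have intX4 : ∀ n, Integrable (fun ω => (θhat n ω - θ) ^ 4) μ := fun n =>
    (hmomθ n 4).congr (Eventually.of_forall fun ω =>
      show |θhat n ω - θ| ^ 4 = (θhat n ω - θ) ^ 4 by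
        rw [pow_abs, abs_of_nonneg (by positivity : (0:ℝ) ≤ (θhat n ω - θ) ^ 4)])
  -- split of the error integral
  have hGsplit : ∀ n : ℕ, (∫ ω, ((θhat n ω + k * σhat2 n ω / ((n : ℝ) * θhat n ω) - θ) ^ 3 - (θhat n ω - θ) ^ 3 - 3 * k * σ2 / ((n : ℝ) * θ) * (θhat n ω - θ) ^ 2) ∂μ)
      = (∫ ω, (θhat n ω + k * σhat2 n ω / ((n : ℝ) * θhat n ω) - θ) ^ 3 ∂μ) - (∫ ω, (θhat n ω - θ) ^ 3 ∂μ) - 3 * k * σ2 / ((n : ℝ) * θ) * (∫ ω, (θhat n ω - θ) ^ 2 ∂μ) := by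
    intro n
    have i3 : Integrable (fun ω => 3 * k * σ2 / ((n : ℝ) * θ) * (θhat n ω - θ) ^ 2) μ :=
      (intX2 n).const_mul _
    have i12 : Integrable (fun ω => (θhat n ω + k * σhat2 n ω / ((n : ℝ) * θhat n ω) - θ) ^ 3
        - (θhat n ω - θ) ^ 3) μ := (hintadj n).sub (intX3 n)
    rw [integral_sub i12 i3, integral_sub (hintadj n) (intX3 n), integral_const_mul]
  -- big-O conversions
  have hA4O : (fun n : ℕ => (∫ ω, (θhat n ω - θ) ^ 4 ∂μ)) =O[atTop] fun n : ℕ => (n : ℝ) ^ (-(2:ℝ)) := by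
    refine (hA13 4 (by norm_num)).congr (fun n => ?_) (fun n => by norm_num)
    exact integral_congr_ae (Eventually.of_forall fun ω =>
      show |θhat n ω - θ| ^ 4 = (θhat n ω - θ) ^ 4 by
        rw [pow_abs, abs_of_nonneg (by positivity : (0:ℝ) ≤ (θhat n ω - θ) ^ 4)])
  have hA3O : (fun n : ℕ => (∫ ω, |θhat n ω - θ| ^ 3 ∂μ)) =O[atTop] fun n : ℕ => (n : ℝ) ^ (-(3/2:ℝ)) :=
    (hA13 3 (by norm_num)).congr (fun n => rfl) (fun n => by norm_num)
  have hB2O : (fun n : ℕ => (∫ ω, (σhat2 n ω - σ2) ^ 2 ∂μ)) =O[atTop] fun n : ℕ => (n : ℝ) ^ (-(2:ℝ)) := by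
    refine (hA32 2 (le_refl 2)).congr (fun n => rfl) (fun n => ?_)
    rw [← Real.rpow_natCast (n:ℝ) 2, ← Real.rpow_neg (Nat.cast_nonneg n)]
    norm_num
  have hB4O : (fun n : ℕ => (∫ ω, (σhat2 n ω - σ2) ^ 4 ∂μ)) =O[atTop] fun n : ℕ => (n : ℝ) ^ (-(4:ℝ)) := by
    refine (hA32 4 (by norm_num)).congr (fun n => rfl) (fun n => ?_)
    rw [← Real.rpow_natCast (n:ℝ) 4, ← Real.rpow_neg (Nat.cast_nonneg n)]
    norm_num
  -- limits of moments
  have tA4 : Tendsto (fun n : ℕ => (n : ℝ) * (∫ ω, (θhat n ω - θ) ^ 4 ∂μ)) atTop (nhds 0) :=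
    tendsto_nat_mul _ 2 one_lt_two hA4O
  have tB2n : Tendsto (fun n : ℕ => (n : ℝ) * (∫ ω, (σhat2 n ω - σ2) ^ 2 ∂μ)) atTop (nhds 0) :=
    tendsto_nat_mul _ 2 one_lt_two hB2O
  have tA3 : Tendsto (fun n : ℕ => (n : ℝ) * (∫ ω, |θhat n ω - θ| ^ 3 ∂μ)) atTop (nhds 0) :=
    tendsto_nat_mul _ (3/2) (by norm_num) hA3O
  have B4nonneg : ∀ n : ℕ, 0 ≤ (∫ ω, (σhat2 n ω - σ2) ^ 4 ∂μ) := fun n =>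
    integral_nonneg fun ω => by positivity
  have tB4s : Tendsto (fun n : ℕ => Real.sqrt (n : ℝ) * (∫ ω, (σhat2 n ω - σ2) ^ 4 ∂μ)) atTop (nhds 0) :=
    tendsto_sqrt_mul _ 4 (by norm_num) B4nonneg hB4O
  have tB4 : Tendsto (fun n : ℕ => (∫ ω, (σhat2 n ω - σ2) ^ 4 ∂μ)) atTop (nhds 0) :=
    hB4O.trans_tendsto (tendsto_rpow_nat 4 (by norm_num))
  have tB2 : Tendsto (fun n : ℕ => (∫ ω, (σhat2 n ω - σ2) ^ 2 ∂μ)) atTop (nhds 0) :=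
    hB2O.trans_tendsto (tendsto_rpow_nat 2 (by norm_num))
  have tin : Tendsto (fun n : ℕ => ((n : ℝ))⁻¹) atTop (nhds 0) :=
    tendsto_inv_atTop_zero.comp tendsto_natCast_atTop_atTop
  have tis : Tendsto (fun n : ℕ => (Real.sqrt (n : ℝ))⁻¹) atTop (nhds 0) := tendsto_inv_sqrt
  have tA2 : Tendsto (fun n : ℕ => (∫ ω, (θhat n ω - θ) ^ 2 ∂μ)) atTop (nhds 0) := by
    have base := tin.mul hA11
    rw [zero_mul] at base
    refine Filter.Tendsto.congr' ?_ base
    filter_upwards [eventually_ge_atTop 1] with n hn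
    have hn0 : ((n : ℝ)) ≠ 0 := by positivity
    beta_reduce
    rw [← mul_assoc, inv_mul_cancel₀ hn0, one_mul]
  have tA2s : Tendsto (fun n : ℕ => Real.sqrt (n : ℝ) * (∫ ω, (θhat n ω - θ) ^ 2 ∂μ)) atTop (nhds 0) := by
    have base := tis.mul hA11
    rw [zero_mul] at base
    refine Filter.Tendsto.congr' ?_ base
    filter_upwards [eventually_ge_atTop 1] with n hn
    have hn1 : (1:ℝ) ≤ (n : ℝ) := by exact_mod_cast hn
    have hs0 : Real.sqrt (n : ℝ) ≠ 0 := by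
      refine ne_of_gt (Real.sqrt_pos.mpr (by linarith))
    have h2 : Real.sqrt (n : ℝ) * Real.sqrt (n : ℝ) = ((n : ℝ)) := Real.mul_self_sqrt (by linarith)
    beta_reduce
    rw [inv_mul_eq_div, div_eq_iff hs0]
    linear_combination (∫ ω, (θhat n ω - θ) ^ 2 ∂μ) * h2.symm
  have tA2is : Tendsto (fun n : ℕ => (Real.sqrt (n : ℝ))⁻¹ * (∫ ω, (θhat n ω - θ) ^ 2 ∂μ)) atTop (nhds 0) := by
    simpa using tis.mul tA2
  -- limit of the rescaled majorant
  have tH : Tendsto (fun n : ℕ => (n : ℝ) ^ 2 * ((3 * |k| / (2 * ε * (n : ℝ))) * (∫ ω, (θhat n ω - θ) ^ 4 ∂μ) + (3 * |k| / (2 * ε * (n : ℝ)) + 2 * |k| ^ 3 / (ε ^ 3 * (n : ℝ) ^ 4)) * (∫ ω, (σhat2 n ω - σ2) ^ 2 ∂μ) + (3 * |k| * σ2 / (ε * |θ| * (n : ℝ))) * (∫ ω, |θhat n ω - θ| ^ 3 ∂μ) + (3 * k ^ 2 / (ε ^ 2 * (n : ℝ) ^ 2) * (σ2 ^ 2 *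 Real.sqrt (n : ℝ) + (Real.sqrt (n : ℝ))⁻¹)) * (∫ ω, (θhat n ω - θ) ^ 2 ∂μ) + (3 * k ^ 2 * Real.sqrt (n : ℝ) / (ε ^ 2 * (n : ℝ) ^ 2) + 2 * |k| ^ 3 / (ε ^ 3 * (n : ℝ) ^ 2)) * (∫ ω, (σhat2 n ω - σ2) ^ 4 ∂μ) + (3 * k ^ 2 * σ2 ^ 2 / (ε ^ 2 * (n : ℝ) ^ 2) * (Real.sqrt (n : ℝ))⁻¹ + 4 * |k| ^ 3 * σ2 ^ 3 / (ε ^ 3 * (n : ℝ) ^ 3)))) atTop (nhds 0) := by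
    have e1 : Tendsto (fun n : ℕ => 3 * |k| / (2 * ε) * ((n : ℝ) * (∫ ω, (θhat n ω - θ) ^ 4 ∂μ))) atTop (nhds 0) := by
      simpa using tA4.const_mul (3 * |k| / (2 * ε))
    have e2 : Tendsto (fun n : ℕ => 3 * |k| / (2 * ε) * ((n : ℝ) * (∫ ω, (σhat2 n ω - σ2) ^ 2 ∂μ))
        + 2 * |k| ^ 3 / ε ^ 3 * (((n : ℝ))⁻¹ * (((n : ℝ))⁻¹ * (∫ ω, (σhat2 n ω - σ2) ^ 2 ∂μ)))) atTop (nhds 0) := by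
      simpa using (tB2n.const_mul (3 * |k| / (2 * ε))).add
        ((tin.mul (tin.mul tB2)).const_mul (2 * |k| ^ 3 / ε ^ 3))
    have e3 : Tendsto (fun n : ℕ => 3 * |k| * σ2 / (ε * |θ|) * ((n : ℝ) * (∫ ω, |θhat n ω - θ| ^ 3 ∂μ))) atTop (nhds 0) := by
      simpa using tA3.const_mul (3 * |k| * σ2 / (ε * |θ|))
    have e4 : Tendsto (fun n : ℕ => 3 * k ^ 2 / ε ^ 2 *
        (σ2 ^ 2 * (Real.sqrt (n : ℝ) * (∫ ω, (θhat n ω - θ) ^ 2 ∂μ)) + (Real.sqrt (n : ℝ))⁻¹ * (∫ ω, (θhat n ω - θ) ^ 2 ∂μ))) atTop (nhds 0) := by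
      simpa using ((tA2s.const_mul (σ2 ^ 2)).add tA2is).const_mul (3 * k ^ 2 / ε ^ 2)
    have e5 : Tendsto (fun n : ℕ => 3 * k ^ 2 / ε ^ 2 * (Real.sqrt (n : ℝ) * (∫ ω, (σhat2 n ω - σ2) ^ 4 ∂μ))
        + 2 * |k| ^ 3 / ε ^ 3 * (∫ ω, (σhat2 n ω - σ2) ^ 4 ∂μ)) atTop (nhds 0) := by
      simpa using (tB4s.const_mul (3 * k ^ 2 / ε ^ 2)).add (tB4.const_mul (2 * |k| ^ 3 / ε ^ 3))
    have e6 : Tendsto (fun n : ℕ => 3 * k ^ 2 * σ2 ^ 2 / ε ^ 2 * (Real.sqrt (n : ℝ))⁻¹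
        + 4 * |k| ^ 3 * σ2 ^ 3 / ε ^ 3 * ((n : ℝ))⁻¹) atTop (nhds 0) := by
      simpa using (tis.const_mul (3 * k ^ 2 * σ2 ^ 2 / ε ^ 2)).add
        (tin.const_mul (4 * |k| ^ 3 * σ2 ^ 3 / ε ^ 3))
    have sE : Tendsto (fun n : ℕ => 3 * |k| / (2 * ε) * ((n : ℝ) * (∫ ω, (θhat n ω - θ) ^ 4 ∂μ)) + (3 * |k| / (2 * ε) * ((n : ℝ) * (∫ ω, (σhat2 n ω - σ2) ^ 2 ∂μ)) + 2 * |k| ^ 3 / ε ^ 3 * (((n : ℝ))⁻¹ * (((n : ℝ))⁻¹ * (∫ ω, (σhat2 n ω - σ2) ^ 2 ∂μ)))) + 3 * |k| * σ2 / (ε * |θ|) * ((n : ℝ) * (∫ ω, |θhat n ω - θ| ^ 3 ∂μ)) + 3 * k ^ 2 / ε ^ 2 * (σ2 ^ 2 * (Real.sqrt (n : ℝ) * (∫ ω, (θhat n ω - θ) ^ 2 ∂μ)) + (Real.sqrt (n : ℝ))⁻¹ * (∫ ω, (θhat n ω - θ) ^ 2 ∂μ)) + (3 * k ^ 2 / ε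 ^ 2 * (Real.sqrt (n : ℝ) * (∫ ω, (σhat2 n ω - σ2) ^ 4 ∂μ)) + 2 * |k| ^ 3 / ε ^ 3 * (∫ ω, (σhat2 n ω - σ2) ^ 4 ∂μ)) + (3 * k ^ 2 * σ2 ^ 2 / ε ^ 2 * (Real.sqrt (n : ℝ))⁻¹ + 4 * |k| ^ 3 * σ2 ^ 3 / ε ^ 3 * ((n : ℝ))⁻¹)) atTop (nhds 0) := by
      simpa using ((((e1.add e2).add e3).add e4).add e5).add e6
    refine Filter.Tendsto.congr' ?_ sE
    filter_upwards [eventually_ge_atTop 1] with n hn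
    have hn1 : (1:ℝ) ≤ (n : ℝ) := by exact_mod_cast hn
    have hn0 : ((n : ℝ)) ≠ 0 := by positivity
    beta_reduce
    generalize (∫ ω, (θhat n ω - θ) ^ 4 ∂μ) = a4
    generalize (∫ ω, (σhat2 n ω - σ2) ^ 2 ∂μ) = b2
    generalize (∫ ω, |θhat n ω - θ| ^ 3 ∂μ) = a3
    generalize (∫ ω, (θhat n ω - θ) ^ 2 ∂μ) = a2
    generalize (∫ ω, (σhat2 n ω - σ2) ^ 4 ∂μ) = b4
    generalize Real.sqrt (n : ℝ) = r
    have hnn : ((n : ℝ))⁻¹ * (n : ℝ) = 1 := inv_mul_cancel₀ hn0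
    field_simp
  -- a.e. bound of the error integral
  have hGH : ∀ n : ℕ, 1 ≤ n → |(∫ ω, ((θhat n ω + k * σhat2 n ω / ((n : ℝ) * θhat n ω) - θ) ^ 3 - (θhat n ω - θ) ^ 3 - 3 * k * σ2 / ((n : ℝ) * θ) * (θhat n ω - θ) ^ 2) ∂μ)| ≤ (3 * |k| / (2 * ε * (n : ℝ))) * (∫ ω, (θhat n ω - θ) ^ 4 ∂μ) + (3 * |k| / (2 * ε * (n : ℝ)) + 2 * |k| ^ 3 / (ε ^ 3 * (n : ℝ) ^ 4)) * (∫ ω, (σhat2 n ω - σ2) ^ 2 ∂μ) + (3 * |k| * σ2 / (ε * |θ| * (n : ℝ))) * (∫ ω, |θhat n ω - θ| ^ 3 ∂μ) + (3 * k ^ 2 / (ε ^ 2 * (n : ℝ) ^ 2) * (σ2 ^ 2 * Real.sqrt (n : ℝ) + (Real.sqrt (n : ℝ))⁻¹)) * (∫ ω, (θhat n ω - θ) ^ 2 ∂μ) + (3 * k ^ 2 * Real.sqrt (n : ℝ) / (ε ^ 2 * (n : ℝ) ^ 2) + 2 * |k| ^ 3 / (ε ^ 3 * (n : ℝ) ^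 2)) * (∫ ω, (σhat2 n ω - σ2) ^ 4 ∂μ) + (3 * k ^ 2 * σ2 ^ 2 / (ε ^ 2 * (n : ℝ) ^ 2) * (Real.sqrt (n : ℝ))⁻¹ + 4 * |k| ^ 3 * σ2 ^ 3 / (ε ^ 3 * (n : ℝ) ^ 3)) := by
    intro n hn
    have hn1 : (1:ℝ) ≤ (n : ℝ) := by exact_mod_cast hn
    have intg : Integrable (fun ω => ((θhat n ω + k * σhat2 n ω / ((n : ℝ) * θhat n ω) - θ) ^ 3 - (θhat n ω - θ) ^ 3 - 3 * k * σ2 / ((n : ℝ) * θ) * (θhat n ω - θ) ^ 2)) μ :=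
      ((hintadj n).sub (intX3 n)).sub ((intX2 n).const_mul _)
    have ii1 : Integrable (fun ω => (3 * |k| / (2 * ε * (n : ℝ))) * (θhat n ω - θ) ^ 4) μ := (intX4 n).const_mul _
    have ii2 : Integrable (fun ω => (3 * |k| / (2 * ε * (n : ℝ)) + 2 * |k| ^ 3 / (ε ^ 3 * (n : ℝ) ^ 4)) * (σhat2 n ω - σ2) ^ 2) μ := (hmomσ n 2).const_mul _
    have ii3 : Integrable (fun ω => (3 * |k| * σ2 / (ε * |θ| * (n : ℝ))) * |θhat n ω - θ| ^ 3) μ := (hmomθ n 3).const_mul _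
    have ii4 : Integrable (fun ω => (3 * k ^ 2 / (ε ^ 2 * (n : ℝ) ^ 2) * (σ2 ^ 2 * Real.sqrt (n : ℝ) + (Real.sqrt (n : ℝ))⁻¹)) * (θhat n ω - θ) ^ 2) μ := (intX2 n).const_mul _
    have ii5 : Integrable (fun ω => (3 * k ^ 2 * Real.sqrt (n : ℝ) / (ε ^ 2 * (n : ℝ) ^ 2) + 2 * |k| ^ 3 / (ε ^ 3 * (n : ℝ) ^ 2)) * (σhat2 n ω - σ2) ^ 4) μ := (hmomσ n 4).const_mul _
    have s12 : Integrable (fun ω => (3 * |k| / (2 * ε * (n : ℝ))) * (θhat n ω - θ) ^ 4 + (3 * |k| / (2 * ε * (n : ℝ)) + 2 * |k| ^ 3 / (ε ^ 3 * (n : ℝ) ^ 4)) * (σhat2 n ω - σ2) ^ 2) μ := ii1.add ii2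
    have s123 : Integrable (fun ω => (3 * |k| / (2 * ε * (n : ℝ))) * (θhat n ω - θ) ^ 4 + (3 * |k| / (2 * ε * (n : ℝ)) + 2 * |k| ^ 3 / (ε ^ 3 * (n : ℝ) ^ 4)) * (σhat2 n ω - σ2) ^ 2 + (3 * |k| * σ2 / (ε * |θ| * (n : ℝ))) * |θhat n ω - θ| ^ 3) μ := s12.add ii3
    have s1234 : Integrable (fun ω => (3 * |k| / (2 * ε * (n : ℝ))) * (θhat n ω - θ) ^ 4 + (3 * |k| / (2 * ε * (n : ℝ)) + 2 * |k| ^ 3 / (ε ^ 3 * (n : ℝ) ^ 4)) * (σhat2 n ω - σ2) ^ 2 + (3 * |k| * σ2 / (ε * |θ| * (n : ℝ))) * |θhat n ω - θ| ^ 3 + (3 * k ^ 2 / (ε ^ 2 * (n : ℝ) ^ 2) * (σ2 ^ 2 * Real.sqrt (n : ℝ) + (Real.sqrt (n : ℝ))⁻¹)) * (θhat n ω - θ) ^ 2) μ := s123.add ii4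
    have s12345 : Integrable (fun ω => (3 * |k| / (2 * ε * (n : ℝ))) * (θhat n ω - θ) ^ 4 + (3 * |k| / (2 * ε * (n : ℝ)) + 2 * |k| ^ 3 / (ε ^ 3 * (n : ℝ) ^ 4)) * (σhat2 n ω - σ2) ^ 2 + (3 * |k| * σ2 / (ε * |θ| * (n : ℝ))) * |θhat n ω - θ| ^ 3 + (3 * k ^ 2 / (ε ^ 2 * (n : ℝ) ^ 2) * (σ2 ^ 2 * Real.sqrt (n : ℝ) + (Real.sqrt (n : ℝ))⁻¹)) * (θhat n ω - θ) ^ 2 + (3 * k ^ 2 * Real.sqrt (n : ℝ) / (ε ^ 2 * (n : ℝ) ^ 2) + 2 * |k| ^ 3 / (ε ^ 3 * (n : ℝ) ^ 2)) * (σhat2 n ω - σ2) ^ 4) μ := s1234.add ii5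
    have inth : Integrable (fun ω => (3 * |k| / (2 * ε * (n : ℝ))) * (θhat n ω - θ) ^ 4 + (3 * |k| / (2 * ε * (n : ℝ)) + 2 * |k| ^ 3 / (ε ^ 3 * (n : ℝ) ^ 4)) * (σhat2 n ω - σ2) ^ 2 + (3 * |k| * σ2 / (ε * |θ| * (n : ℝ))) * |θhat n ω - θ| ^ 3 + (3 * k ^ 2 / (ε ^ 2 * (n : ℝ) ^ 2) * (σ2 ^ 2 * Real.sqrt (n : ℝ) + (Real.sqrt (n : ℝ))⁻¹)) * (θhat n ω - θ) ^ 2 + (3 * k ^ 2 * Real.sqrt (n : ℝ) / (ε ^ 2 * (n : ℝ) ^ 2) + 2 * |k| ^ 3 / (ε ^ 3 * (n : ℝ) ^ 2)) * (σhat2 n ω - σ2) ^ 4 + (3 * k ^ 2 * σ2 ^ 2 / (ε ^ 2 * (n : ℝ) ^ 2) * (Real.sqrt (n : ℝ))⁻¹ + 4 * |k| ^ 3 * σ2 ^ 3 / (ε ^ 3 * (n : ℝ) ^ 3))) μ := s12345.add (integrable_const _)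
    have hae : ∀ᵐ ω ∂μ, |((θhat n ω + k * σhat2 n ω / ((n : ℝ) * θhat n ω) - θ) ^ 3 - (θhat n ω - θ) ^ 3 - 3 * k * σ2 / ((n : ℝ) * θ) * (θhat n ω - θ) ^ 2)| ≤ (3 * |k| / (2 * ε * (n : ℝ))) * (θhat n ω - θ) ^ 4 + (3 * |k| / (2 * ε * (n : ℝ)) + 2 * |k| ^ 3 / (ε ^ 3 * (n : ℝ) ^ 4)) * (σhat2 n ω - σ2) ^ 2 + (3 * |k| * σ2 / (ε * |θ| * (n : ℝ))) * |θhat n ω - θ| ^ 3 + (3 * k ^ 2 / (ε ^ 2 * (n : ℝ) ^ 2) * (σ2 ^ 2 * Real.sqrt (n : ℝ) + (Real.sqrt (n : ℝ))⁻¹)) * (θhat n ω - θ) ^ 2 + (3 * k ^ 2 * Real.sqrt (n : ℝ) / (ε ^ 2 * (n : ℝ) ^ 2) + 2 * |k| ^ 3 / (ε ^ 3 * (n : ℝ) ^ 2)) * (σhat2 n ω - σ2) ^ 4 + (3 * k ^ 2 * σ2 ^ 2 / (ε ^ 2 * (n : ℝ) ^ 2) * (Real.sqrt (n : ℝ))⁻¹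 + 4 * |k| ^ 3 * σ2 ^ 3 / (ε ^ 3 * (n : ℝ) ^ 3)) := by
      filter_upwards [hA4 n] with ω hω
      exact ptwise k θ σ2 ε hθ hε hσ2.le ((n : ℝ)) hn1 (θhat n ω) (σhat2 n ω) hω
    calc |(∫ ω, ((θhat n ω + k * σhat2 n ω / ((n : ℝ) * θhat n ω) - θ) ^ 3 - (θhat n ω - θ) ^ 3 - 3 * k * σ2 / ((n : ℝ) * θ) * (θhat n ω - θ) ^ 2) ∂μ)| ≤ ∫ ω, |((θhat n ω + k * σhat2 n ω / ((n : ℝ) * θhat n ω) - θ) ^ 3 - (θhat n ω - θ) ^ 3 - 3 * k * σ2 / ((n : ℝ) * θ) * (θhat n ω - θ) ^ 2)| ∂μ := by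
          exact
            norm_integral_le_integral_norm (μ := μ) (fun ω => ((θhat n ω + k * σhat2 n ω / ((n : ℝ) * θhat n ω) - θ) ^ 3 - (θhat n ω - θ) ^ 3 - 3 * k * σ2 / ((n : ℝ) * θ) * (θhat n ω - θ) ^ 2))
      _ ≤ ∫ ω, (3 * |k| / (2 * ε * (n : ℝ))) * (θhat n ω - θ) ^ 4 + (3 * |k| / (2 * ε * (n : ℝ)) + 2 * |k| ^ 3 / (ε ^ 3 * (n : ℝ) ^ 4)) * (σhat2 n ω - σ2) ^ 2 + (3 * |k| * σ2 / (ε * |θ| * (n : ℝ))) * |θhat n ω - θ| ^ 3 + (3 * k ^ 2 / (ε ^ 2 * (n : ℝ) ^ 2) * (σ2 ^ 2 * Real.sqrt (n : ℝ) + (Real.sqrt (n : ℝ))⁻¹)) * (θhat n ω - θ) ^ 2 + (3 * k ^ 2 * Real.sqrt (n : ℝ) / (ε ^ 2 * (n : ℝ) ^ 2) + 2 * |k| ^ 3 / (ε ^ 3 * (n : ℝ) ^ 2)) * (σhat2 n ω - σ2) ^ 4 + (3 * k ^ 2 * σ2 ^ 2 / (ε ^ 2 * (n : ℝ) ^ 2)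 * (Real.sqrt (n : ℝ))⁻¹ + 4 * |k| ^ 3 * σ2 ^ 3 / (ε ^ 3 * (n : ℝ) ^ 3)) ∂μ := integral_mono_ae intg.abs inth hae
      _ = (3 * |k| / (2 * ε * (n : ℝ))) * (∫ ω, (θhat n ω - θ) ^ 4 ∂μ) + (3 * |k| / (2 * ε * (n : ℝ)) + 2 * |k| ^ 3 / (ε ^ 3 * (n : ℝ) ^ 4)) * (∫ ω, (σhat2 n ω - σ2) ^ 2 ∂μ) + (3 * |k| * σ2 / (ε * |θ| * (n : ℝ))) * (∫ ω, |θhat n ω - θ| ^ 3 ∂μ) + (3 * k ^ 2 / (ε ^ 2 * (n : ℝ) ^ 2) * (σ2 ^ 2 * Real.sqrt (n : ℝ) + (Real.sqrt (n : ℝ))⁻¹)) * (∫ ω, (θhat n ω - θ) ^ 2 ∂μ) + (3 * k ^ 2 * Real.sqrt (n : ℝ) / (ε ^ 2 * (n : ℝ) ^ 2) + 2 * |k| ^ 3 / (ε ^ 3 * (n : ℝ) ^ 2)) * (∫ ω, (σhat2 n ω - σ2) ^ 4 ∂μ) + (3 * k ^ 2 * σ2 ^ 2 / (ε ^ 2 *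 (n : ℝ) ^ 2) * (Real.sqrt (n : ℝ))⁻¹ + 4 * |k| ^ 3 * σ2 ^ 3 / (ε ^ 3 * (n : ℝ) ^ 3)) := by
          rw [integral_add s12345 (integrable_const _), integral_add s1234 ii5,
              integral_add s123 ii4, integral_add s12 ii3, integral_add ii1 ii2,
              integral_const_mul, integral_const_mul, integral_const_mul,
              integral_const_mul, integral_const_mul, integral_const]
          simp [measure_univ]
  -- squeeze for the error part
  have tG : Tendsto (fun n : ℕ => (n : ℝ) ^ 2 * (∫ ω, ((θhat n ω + k * σhat2 n ω / ((n : ℝ) * θhat n ω) - θ) ^ 3 - (θhat n ω - θ) ^ 3 - 3 * k * σ2 / ((n : ℝ) * θ) * (θhat n ω - θ) ^ 2) ∂μ)) atTop (nhds 0) := by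
    refine squeeze_zero_norm' ?_ tH
    filter_upwards [eventually_ge_atTop 1] with n hn
    have hn1 : (1:ℝ) ≤ (n : ℝ) := by exact_mod_cast hn
    calc ‖(n : ℝ) ^ 2 * (∫ ω, ((θhat n ω + k * σhat2 n ω / ((n : ℝ) * θhat n ω) - θ) ^ 3 - (θhat n ω - θ) ^ 3 - 3 * k * σ2 / ((n : ℝ) * θ) * (θhat n ω - θ) ^ 2) ∂μ)‖ = (n : ℝ) ^ 2 * |(∫ ω, ((θhat n ω + k * σhat2 n ω / ((n : ℝ) * θhat n ω) - θ) ^ 3 - (θhat n ω - θ) ^ 3 - 3 * k * σ2 / ((n : ℝ) * θ) * (θhat n ω - θ) ^ 2) ∂μ)| := by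
          rw [Real.norm_eq_abs, abs_mul, abs_of_nonneg (by positivity : (0:ℝ) ≤ (n : ℝ) ^ 2)]
      _ ≤ (n : ℝ) ^ 2 * ((3 * |k| / (2 * ε * (n : ℝ))) * (∫ ω, (θhat n ω - θ) ^ 4 ∂μ) + (3 * |k| / (2 * ε * (n : ℝ)) + 2 * |k| ^ 3 / (ε ^ 3 * (n : ℝ) ^ 4)) * (∫ ω, (σhat2 n ω - σ2) ^ 2 ∂μ) + (3 * |k| * σ2 / (ε * |θ| * (n : ℝ))) * (∫ ω, |θhat n ω - θ| ^ 3 ∂μ) + (3 * k ^ 2 / (ε ^ 2 * (n : ℝ) ^ 2) * (σ2 ^ 2 * Real.sqrt (n : ℝ) + (Real.sqrt (n : ℝ))⁻¹)) * (∫ ω, (θhat n ω - θ) ^ 2 ∂μ) + (3 * k ^ 2 * Real.sqrt (n : ℝ) / (ε ^ 2 * (n : ℝ) ^ 2) + 2 * |k| ^ 3 / (ε ^ 3 * (n : ℝ) ^ 2)) * (∫ ω, (σhat2 n ω - σ2) ^ 4 ∂μ) + (3 * k ^ 2 * σ2 ^ 2 / (ε ^ 2 * (n : ℝ) ^ 2)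 * (Real.sqrt (n : ℝ))⁻¹ + 4 * |k| ^ 3 * σ2 ^ 3 / (ε ^ 3 * (n : ℝ) ^ 3))) :=
          mul_le_mul_of_nonneg_left (hGH n hn) (by positivity)
  -- remainder part
  have tR : Tendsto (fun n : ℕ => (n : ℝ) ^ 2 *
      (3 * k * σ2 / ((n : ℝ) * θ) * (∫ ω, (θhat n ω - θ) ^ 2 ∂μ) - 3 * k * σ2 ^ 2 / ((n : ℝ) ^ 2 * θ))) atTop (nhds 0) := by
    have base := (hA11.const_mul (3 * k * σ2 / θ)).sub
      (tendsto_const_nhds (x := 3 * k * σ2 ^ 2 / θ) (f := atTop))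
    rw [show 3 * k * σ2 / θ * σ2 - 3 * k * σ2 ^ 2 / θ = 0 by ring] at base
    refine Filter.Tendsto.congr' ?_ base
    filter_upwards [eventually_ge_atTop 1] with n hn
    have hn1 : (1:ℝ) ≤ (n : ℝ) := by exact_mod_cast hn
    have hn0 : ((n : ℝ)) ≠ 0 := by positivity
    beta_reduce
    field_simp
  -- main limit
  have main : Tendsto (fun n : ℕ => (n : ℝ) ^ 2 * ((∫ ω, (θhat n ω + k * σhat2 n ω / ((n : ℝ) * θhat n ω) - θ) ^ 3 ∂μ) - (∫ ω, (θhat n ω - θ) ^ 3 ∂μ) - 3 * k * σ2 ^ 2 / ((n : ℝ) ^ 2 * θ))) atTop (nhds 0) := by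
    have tsum := tG.add tR
    rw [add_zero] at tsum
    refine Filter.Tendsto.congr' ?_ tsum
    refine Eventually.of_forall fun n => ?_
    beta_reduce
    rw [hGsplit n]
    ring
  -- convert to little-o
  have h1 : (fun n : ℕ => (n : ℝ) ^ 2 * ((∫ ω, (θhat n ω + k * σhat2 n ω / ((n : ℝ) * θhat n ω) - θ) ^ 3 ∂μ) - (∫ ω, (θhat n ω - θ) ^ 3 ∂μ) - 3 * k * σ2 ^ 2 / ((n : ℝ) ^ 2 * θ))) =o[atTop] (fun _ : ℕ => (1:ℝ)) :=
    (isLittleO_one_iff ℝ).mpr main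
  have h2 := h1.mul_isBigO (isBigO_refl (fun n : ℕ => ((n : ℝ) ^ 2)⁻¹) atTop)
  refine h2.congr' ?_ ?_
  · filter_upwards [eventually_ge_atTop 1] with n hn
    have hn1 : (1:ℝ) ≤ (n : ℝ) := by exact_mod_cast hn
    have hn0 : ((n : ℝ) ^ 2) ≠ 0 := by positivity
    beta_reduce
    rw [mul_comm, ← mul_assoc, inv_mul_cancel₀ hn0, one_mul]
  · exact Eventually.of_forall fun n => one_mul _
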